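/- For any two linear orders σ and τ over a finite set A of m alternatives, and any sorting algorithm that is an arbitrary interleaving of selection-sort and insertion-sort steps, the count function f (where f(ℓ) is the number of drag-and-drop operations moving an alternative up by exactly ℓ positions during the transformation of σ into τ) is the same for all such algorithms. -/

import Mathlib

/-- One step of a selection/insertion sorting algorithm at step index `k`
(0-indexed), transforming the current list `l` towards target ranking `τ`.
If `s = true` a selection-sort step is performed (promote the `τ`-most
preferred alternative of the suffix); if `s = false` an insertion-sort step
is performed (promote the alternative currently at position `k`). In both
cases the picked alternative is promoted so that the top `k+1` alternatives
are in `τ`-order. The second component is the number of positions by which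
the alternative was moved up. -/
def ddStep {α : Type*} [DecidableEq α] (τ l : List α) (k : ℕ) (s : Bool) :
    List α × ℕ :=
  match (if s then τ.filter (fun b => decide (b ∈ l.drop k)) else l.drop k).head? with
  | none => (l, 0)
  | some a =>
      let pre := l.take k
      let p := (pre.filter (fun b => decide (τ.idxOf b < τ.idxOf a))).length
      (pre.take p ++ a :: (pre.drop p ++ (l.drop k).erase a), l.idxOf a - p)

/-- The list maintained by the sorting algorithm `s : ℕ → Bool`
(`true` = SEL, `false` = INS) after `k` steps, starting from `σ` with
target `τ`. -/
def ddRun {α : Type*} [DecidableEq α] (τ : List α) (s : ℕ → Bool) (σ : List α) :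
    ℕ → List α
  | 0 => σ
  | k + 1 => (ddStep τ (ddRun τ s σ k) k (s k)).1

/-- The count function `f^{σ→τ}_𝒜(ℓ)`: the number of drag-and-drop operations
that move an alternative up by exactly `ℓ` positions during the execution of
the sorting algorithm `s` transforming `σ` into `τ`. -/
def countF {α : Type*} [DecidableEq α] (τ σ : List α) (s : ℕ → Bool) (ℓ : ℕ) : ℕ :=
  ((Finset.range τ.length).filter
    (fun k => 0 < ℓ ∧ (ddStep τ (ddRun τ s σ k) k (s k)).2 = ℓ)).card


section DDHelper
open List
variable {α : Type*} [DecidableEq α]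

lemma sublist_indexOf_lt {c d : List α} (hcd : c <+ d) (hd : d.Nodup)
    {x y : α} (hx : x ∈ c) (hy : y ∈ c) (h : c.idxOf x < c.idxOf y) :
    d.idxOf x < d.idxOf y := by
  induction hcd with
  | slnil => cases hx
  | @cons l₁ l₂ b hs ih =>
      have hd' : l₂.Nodup := (nodup_cons.mp hd).2
      have hb : b ∉ l₂ := (nodup_cons.mp hd).1
      have hx2 : x ∈ l₂ := hs.subset hx
      have hy2 : y ∈ l₂ := hs.subset hy
      have hxb : b ≠ x := by rintro rfl; exact hb hx2
      have hyb : b ≠ y := by rintro rfl; exact hb hy2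
      rw [idxOf_cons_ne _ hxb, idxOf_cons_ne _ hyb]
      exact Nat.succ_lt_succ (ih hd' hx hy h)
  | @cons_cons l₁ l₂ b hs ih =>
      have hd' : l₂.Nodup := (nodup_cons.mp hd).2
      by_cases hyb : y = b
      · subst hyb
        rw [idxOf_cons_self] at h
        omega
      · have hy1 : y ∈ l₁ := by
          rcases mem_cons.mp hy with h1 | h1
          · exact absurd h1 hyb
          · exact h1
        have hby : b ≠ y := fun e => hyb e.symm
        by_cases hxb : x = b
        · subst hxb
          rw [idxOf_cons_self]
          rw [idxOf_cons_ne _ hby]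
          exact Nat.succ_pos _
        · have hx1 : x ∈ l₁ := by
            rcases mem_cons.mp hx with h1 | h1
            · exact absurd h1 hxb
            · exact h1
          have hbx : b ≠ x := fun e => hxb e.symm
          rw [idxOf_cons_ne _ hbx, idxOf_cons_ne _ hby] at h ⊢
          exact Nat.succ_lt_succ (ih hd' hx1 hy1 (Nat.lt_of_succ_lt_succ h))

lemma sublist_indexOf_lt_iff {c d : List α} (hcd : c <+ d) (hd : d.Nodup)
    {x y : α} (hx : x ∈ c) (hy : y ∈ c) :
    c.idxOf x < c.idxOf y ↔ d.idxOf x < d.idxOf y := by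
  constructor
  · exact sublist_indexOf_lt hcd hd hx hy
  · intro h
    rcases lt_trichotomy (c.idxOf x) (c.idxOf y) with h1 | h1 | h1
    · exact h1
    · have : x = y := (idxOf_inj hx).mp h1
      subst this; omega
    · have := sublist_indexOf_lt hcd hd hy hx h1
      omega

lemma indexOf_eq_length_filter {c : List α} (hc : c.Nodup) {a : α} (ha : a ∈ c) :
    (c.filter (fun x => decide (c.idxOf x < c.idxOf a))).length = c.idxOf a := by
  induction c with
  | nil => cases ha
  | cons b t ih =>
      by_cases hab : a = b
      · subst hab
        rw [idxOf_cons_self]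
        have : (a :: t).filter (fun x => decide (idxOf x (a :: t) < 0)) = [] := by
          apply filter_eq_nil_iff.mpr
          intro x _
          simp
        rw [this]; rfl
      · have hba : b ≠ a := fun e => hab e.symm
        have hat : a ∈ t := by
          rcases mem_cons.mp ha with h1 | h1
          · exact absurd h1 hab
          · exact h1
        have hbt : b ∉ t := (nodup_cons.mp hc).1
        have ht : t.Nodup := (nodup_cons.mp hc).2
        have hkey : ∀ x ∈ t, (decide (idxOf x (b :: t) < idxOf a (b :: t)))
            = (decide (t.idxOf x < t.idxOf a)) := by
          intro x hx
          have hbx : b ≠ x := fun e => hbt (e ▸ hx)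
          rw [idxOf_cons_ne _ hbx, idxOf_cons_ne _ hba]
          simp [Nat.succ_lt_succ_iff]
        have h1 : decide (idxOf b (b :: t) < idxOf a (b :: t)) = true := by
          rw [idxOf_cons_self, idxOf_cons_ne _ hba]
          simp
        rw [filter_cons, filter_congr hkey, h1]
        simp only [if_true, length_cons, ih ht hat]
        rw [idxOf_cons_ne _ hba]

/-- The intrinsic displacement of alternative `a`. -/
def invL (τ σ : List α) (a : α) : ℕ :=
  (σ.filter (fun x => decide (σ.idxOf x < σ.idxOf a ∧ τ.idxOf a < τ.idxOf x))).length

lemma ddStep_eq_of {τ l : List α} {k : ℕ} {s : Bool} {a : α}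
    (h : (if s then τ.filter (fun b => decide (b ∈ l.drop k)) else l.drop k).head? = some a) :
    ddStep τ l k s =
      ((l.take k).take ((l.take k).filter (fun b => decide (τ.idxOf b < τ.idxOf a))).length ++
        a :: ((l.take k).drop ((l.take k).filter (fun b => decide (τ.idxOf b < τ.idxOf a))).length ++
          (l.drop k).erase a),
       l.idxOf a - ((l.take k).filter (fun b => decide (τ.idxOf b < τ.idxOf a))).length) := by
  unfold ddStep
  rw [h]

lemma ddStep_spec {σ τ : List α} (hσ : σ.Nodup) (hτ : τ.Nodup) (hστ : σ.Perm τ)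
    (l : List α) (k : ℕ) (sb : Bool) (hk : k < σ.length)
    (hlp : l.Perm σ) (hsub : l.drop k <+ σ)
    (hinv : ∀ x ∈ l.take k, ∀ y ∈ l.drop k,
      τ.idxOf y < τ.idxOf x → σ.idxOf x < σ.idxOf y) :
    ∃ a ∈ l.drop k,
      (ddStep τ l k sb).1.drop (k + 1) = (l.drop k).erase a ∧
      (ddStep τ l k sb).1.Perm σ ∧
      (∀ x ∈ (ddStep τ l k sb).1.take (k + 1), ∀ y ∈ (ddStep τ l k sb).1.drop (k + 1),
        τ.idxOf y < τ.idxOf x → σ.idxOf x < σ.idxOf y) ∧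
      (ddStep τ l k sb).2 = invL τ σ a := by
  have hlen : l.length = σ.length := hlp.length_eq
  have hnd : l.Nodup := hlp.nodup_iff.mpr hσ
  have hsnd : (l.drop k).Nodup := hsub.nodup hσ
  have hsufne : l.drop k ≠ [] := by
    intro h
    have := congrArg List.length h
    simp only [length_drop, length_nil] at this
    omega
  obtain ⟨a, ha, hasuf, Hsuf, Hmaint⟩ :
      ∃ a, (if sb then τ.filter (fun x => decide (x ∈ l.drop k)) else l.drop k).head? = some a ∧
        a ∈ l.drop k ∧
        (∀ x ∈ l.drop k, σ.idxOf x < σ.idxOf a → τ.idxOf a < τ.idxOf x) ∧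
        (∀ y ∈ (l.drop k).erase a, τ.idxOf y < τ.idxOf a → σ.idxOf a < σ.idxOf y) := by
    cases sb with
    | false =>
        obtain ⟨a, t, hat⟩ : ∃ a t, l.drop k = a :: t := by
          rcases hdk : l.drop k with _ | ⟨c, t⟩
          · exact absurd hdk hsufne
          · exact ⟨c, t, rfl⟩
        have key : ∀ x ∈ l.drop k, x ≠ a → σ.idxOf a < σ.idxOf x := by
          intro x hx hxa
          have hxt : x ∈ t := by
            rw [hat] at hx
            rcases mem_cons.mp hx with rfl | h
            · exact absurd rfl hxa
            · exact h
          have h0 : (l.drop k).idxOf a < (l.drop k).idxOf x := by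
            rw [hat, idxOf_cons_self, idxOf_cons_ne _ (fun e => hxa e.symm)]
            exact Nat.succ_pos _
          exact sublist_indexOf_lt hsub hσ (by rw [hat]; exact mem_cons_self) hx h0
        refine ⟨a, by rw [if_neg (by simp), hat]; rfl, by rw [hat]; exact mem_cons_self,
          ?_, ?_⟩
        · intro x hx hlt
          rcases eq_or_ne x a with rfl | hne
          · omega
          · have := key x hx hne
            omega
        · intro y hy hlt
          have hy' := (Nodup.mem_erase_iff hsnd).mp hy
          exact key y hy'.2 hy'.1
    | true =>
        have hcne : τ.filter (fun x => decide (x ∈ l.drop k)) ≠ [] := by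
          obtain ⟨x, hx⟩ := exists_mem_of_ne_nil _ hsufne
          have hxτ : x ∈ τ := hστ.subset (hlp.subset (mem_of_mem_drop hx))
          exact ne_nil_of_mem (mem_filter.mpr ⟨hxτ, by simpa using hx⟩)
        obtain ⟨a, t, hat⟩ : ∃ a t, τ.filter (fun x => decide (x ∈ l.drop k)) = a :: t := by
          rcases hdk : τ.filter (fun x => decide (x ∈ l.drop k)) with _ | ⟨c, t⟩
          · exact absurd hdk hcne
          · exact ⟨c, t, rfl⟩
        have hamem : a ∈ τ.filter (fun x => decide (x ∈ l.drop k)) := by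
          rw [hat]; exact mem_cons_self
        have hadrop : a ∈ l.drop k := by
          have := (mem_filter.mp hamem).2
          simpa using this
        have key : ∀ x ∈ l.drop k, x ≠ a → τ.idxOf a < τ.idxOf x := by
          intro x hx hxa
          have hxτ : x ∈ τ := hστ.subset (hlp.subset (mem_of_mem_drop hx))
          have hxc : x ∈ τ.filter (fun x => decide (x ∈ l.drop k)) :=
            mem_filter.mpr ⟨hxτ, by simpa using hx⟩
          have hxt : x ∈ t := by
            rw [hat] at hxc
            rcases mem_cons.mp hxc with rfl | h
            · exact absurd rfl hxa
            · exact h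
          have h0 : (τ.filter (fun x => decide (x ∈ l.drop k))).idxOf a
              < (τ.filter (fun x => decide (x ∈ l.drop k))).idxOf x := by
            rw [hat, idxOf_cons_self, idxOf_cons_ne _ (fun e => hxa e.symm)]
            exact Nat.succ_pos _
          exact sublist_indexOf_lt filter_sublist hτ hamem hxc h0
        refine ⟨a, by rw [if_pos rfl, hat]; rfl, hadrop, ?_, ?_⟩
        · intro x hx hlt
          rcases eq_or_ne x a with rfl | hne
          · omega
          · exact key x hx hne
        · intro y hy hlt
          have hy' := (Nodup.mem_erase_iff hsnd).mp hy
          have := key y hy'.2 hy'.1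
          omega
  -- common part
  have hds := ddStep_eq_of ha
  set pre := l.take k with hpre
  set p := (pre.filter (fun x => decide (τ.idxOf x < τ.idxOf a))).length with hp
  set E := (l.drop k).erase a with hE
  have hprelen : pre.length = k := by rw [hpre, length_take]; omega
  have hple : p ≤ k := by rw [hp, ← hprelen]; exact length_filter_le _ _
  have hl_decomp : pre ++ l.drop k = l := take_append_drop k l
  have hnd' : (pre ++ l.drop k).Nodup := by rw [hl_decomp]; exact hnd
  have hdisj : pre.Disjoint (l.drop k) := (nodup_append'.mp hnd').2.2
  have hanp : a ∉ pre := fun h => hdisj h hasuf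
  have haσ : a ∈ σ := hlp.subset (mem_of_mem_drop hasuf)
  have haτ : a ∈ τ := hστ.subset haσ
  set first := pre.take p ++ a :: pre.drop p with hfirst
  have hfirst_len : first.length = k + 1 := by
    rw [hfirst]
    simp only [length_append, length_cons, length_take, length_drop]
    omega
  have hassoc : pre.take p ++ a :: (pre.drop p ++ E) = first ++ E := by
    rw [hfirst]
    simp [cons_append, append_assoc]
  have hL1 : (ddStep τ l k sb).1 = first ++ E := by rw [hds]; exact hassoc
  have htake : (ddStep τ l k sb).1.take (k + 1) = first := by
    rw [hL1]; exact take_left' hfirst_len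
  have hdrop : (ddStep τ l k sb).1.drop (k + 1) = E := by
    rw [hL1]; exact drop_left' hfirst_len
  have hpermfirst : first ~ a :: pre := by
    rw [hfirst]
    calc pre.take p ++ a :: pre.drop p ~ a :: (pre.take p ++ pre.drop p) := perm_middle
      _ = a :: pre := by rw [take_append_drop]
  have hpermE : a :: E ~ l.drop k := (perm_cons_erase hasuf).symm
  have hL1perm : (ddStep τ l k sb).1 ~ σ := by
    rw [hL1]
    calc first ++ E ~ (a :: pre) ++ E := hpermfirst.append_right E
      _ = a :: (pre ++ E) := rfl
      _ ~ pre ++ a :: E := perm_middle.symm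
      _ ~ pre ++ l.drop k := hpermE.append_left pre
      _ = l := hl_decomp
      _ ~ σ := hlp
  refine ⟨a, hasuf, hdrop, hL1perm, ?_, ?_⟩
  · intro x hx y hy hxy
    rw [htake] at hx
    rw [hdrop] at hy
    have hyd : y ∈ l.drop k := mem_of_mem_erase hy
    rcases mem_cons.mp (hpermfirst.subset hx) with rfl | hxpre
    · exact Hmaint y hy hxy
    · exact hinv x hxpre y hyd hxy
  · -- displacement
    have hdisp : (ddStep τ l k sb).2 = l.idxOf a - p := by rw [hds]
    have hidx : l.idxOf a = k + (l.drop k).idxOf a := by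
      conv_lhs => rw [← hl_decomp]
      rw [idxOf_append_of_notMem hanp, hprelen]
    have hfiltereq : (l.drop k).filter (fun x => decide ((l.drop k).idxOf x < (l.drop k).idxOf a))
        = (l.drop k).filter (fun x => decide (σ.idxOf x < σ.idxOf a)) := by
      apply filter_congr
      intro x hx
      exact decide_eq_decide.mpr (sublist_indexOf_lt_iff hsub hσ hx hasuf)
    have hsufidx : (l.drop k).idxOf a
        = ((l.drop k).filter (fun x => decide (σ.idxOf x < σ.idxOf a))).length := by
      rw [← hfiltereq, indexOf_eq_length_filter hsnd hasuf]
    have hkp : k - p = (pre.filter (fun x => decide (τ.idxOf a < τ.idxOf x))).length := by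
      have hperm2 := filter_append_perm (fun x => decide (τ.idxOf x < τ.idxOf a)) pre
      have hlen2 : p + (pre.filter (fun x => !decide (τ.idxOf x < τ.idxOf a))).length
          = k := by
        have h5 := hperm2.length_eq
        rw [length_append] at h5
        omega
      have hne2 : pre.filter (fun x => !decide (τ.idxOf x < τ.idxOf a))
          = pre.filter (fun x => decide (τ.idxOf a < τ.idxOf x)) := by
        apply filter_congr
        intro x hx
        have hxτ : x ∈ τ := hστ.subset (hlp.subset (mem_of_mem_take hx))
        have hxa : x ≠ a := fun e => hanp (e ▸ hx)
        have hne3 : τ.idxOf x ≠ τ.idxOf a := fun e => hxa ((idxOf_inj hxτ).mp e)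
        rw [← decide_not]
        exact decide_eq_decide.mpr (by omega)
      rw [hne2] at hlen2
      rw [← hlen2, Nat.add_sub_cancel_left]
    have hinvLeq : invL τ σ a
        = (pre.filter (fun x => decide (τ.idxOf a < τ.idxOf x))).length
          + ((l.drop k).filter (fun x => decide (σ.idxOf x < σ.idxOf a))).length := by
      unfold invL
      have h1 := ((hlp.symm).filter
        (fun x => decide (σ.idxOf x < σ.idxOf a ∧ τ.idxOf a < τ.idxOf x))).length_eq
      rw [h1]
      conv_lhs => rw [← hl_decomp]
      rw [filter_append, length_append]
      have hpreF : pre.filter (fun x => decide (σ.idxOf x < σ.idxOf a ∧ τ.idxOf a < τ.idxOf x))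
          = pre.filter (fun x => decide (τ.idxOf a < τ.idxOf x)) :=
        filter_congr (fun x hx => decide_eq_decide.mpr
          ⟨fun h => h.2, fun h => ⟨hinv x hx a hasuf h, h⟩⟩)
      have hsufF : (l.drop k).filter (fun x => decide (σ.idxOf x < σ.idxOf a ∧ τ.idxOf a < τ.idxOf x))
          = (l.drop k).filter (fun x => decide (σ.idxOf x < σ.idxOf a)) :=
        filter_congr (fun x hx => decide_eq_decide.mpr
          ⟨fun h => h.1, fun h => ⟨h, Hsuf x hx h⟩⟩)
      rw [hpreF, hsufF]
    rw [hdisp, hidx, hsufidx, hinvLeq, ← hkp]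
    rw [Nat.add_comm k _, Nat.add_sub_assoc hple, Nat.add_comm]

lemma ddRun_good {σ τ : List α} (hσ : σ.Nodup) (hτ : τ.Nodup) (hστ : σ.Perm τ)
    (s : ℕ → Bool) : ∀ k, k ≤ σ.length →
    (ddRun τ s σ k).Perm σ ∧ (ddRun τ s σ k).drop k <+ σ ∧
    (∀ x ∈ (ddRun τ s σ k).take k, ∀ y ∈ (ddRun τ s σ k).drop k,
      τ.idxOf y < τ.idxOf x → σ.idxOf x < σ.idxOf y) := by
  intro k
  induction k with
  | zero => intro _; exact ⟨Perm.refl σ, by simp [ddRun], by simp [ddRun]⟩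
  | succ k ih =>
      intro hk
      obtain ⟨h1, h2, h3⟩ := ih (by omega)
      obtain ⟨a, ha, hd, hp, hi, _⟩ :=
        ddStep_spec hσ hτ hστ (ddRun τ s σ k) k (s k) (by omega) h1 h2 h3
      refine ⟨hp, ?_, hi⟩
      show (ddStep τ (ddRun τ s σ k) k (s k)).1.drop (k + 1) <+ σ
      rw [hd]
      exact erase_sublist.trans h2

lemma ddRun_chain' {σ τ : List α} (hσ : σ.Nodup) (hτ : τ.Nodup) (hστ : σ.Perm τ)
    (s : ℕ → Bool) : ∀ k, k < σ.length → ∃ a, a ∈ (ddRun τ s σ k).drop k ∧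
      (ddRun τ s σ (k + 1)).drop (k + 1) = ((ddRun τ s σ k).drop k).erase a ∧
      (ddStep τ (ddRun τ s σ k) k (s k)).2 = invL τ σ a := by
  intro k hk
  obtain ⟨h1, h2, h3⟩ := ddRun_good hσ hτ hστ s k (by omega)
  obtain ⟨a, ha, hd, _, _, hv⟩ :=
    ddStep_spec hσ hτ hστ (ddRun τ s σ k) k (s k) hk h1 h2 h3
  exact ⟨a, ha, hd, hv⟩

lemma countF_eq {σ τ : List α} (hσ : σ.Nodup) (hτ : τ.Nodup) (hστ : σ.Perm τ)
    (s : ℕ → Bool) (ℓ : ℕ) (hℓ : 1 ≤ ℓ) :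
    countF τ σ s ℓ = (σ.toFinset.filter (fun a => invL τ σ a = ℓ)).card := by
  classical
  have hτlen : τ.length = σ.length := hστ.length_eq.symm
  choose f hf1 hf2 hf3 using ddRun_chain' hσ hτ hστ s
  have hsnd : ∀ k, k ≤ σ.length → ((ddRun τ s σ k).drop k).Nodup :=
    fun k hk => ((ddRun_good hσ hτ hστ s k hk).2.1).nodup hσ
  have hsubset : ∀ j j', j ≤ j' → j' ≤ σ.length →
      ∀ x ∈ (ddRun τ s σ j').drop j', x ∈ (ddRun τ s σ j).drop j := by
    intro j j' hjj' hj'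
    induction j' with
    | zero =>
        intro x hx
        have : j = 0 := by omega
        subst this
        exact hx
    | succ n ih =>
        intro x hx
        rcases Nat.eq_or_lt_of_le hjj' with rfl | hlt
        · exact hx
        · have hn : j ≤ n := by omega
          apply ih hn (by omega)
          rw [hf2 n (by omega)] at hx
          exact mem_of_mem_erase hx
  unfold countF
  rw [hτlen]
  apply Finset.card_bij (fun k hk => f k (Finset.mem_range.mp (Finset.mem_filter.mp hk).1))
  · intro k hk
    have hk' : k < σ.length := Finset.mem_range.mp (Finset.mem_filter.mp hk).1
    have hcond := (Finset.mem_filter.mp hk).2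
    apply Finset.mem_filter.mpr
    constructor
    · apply mem_toFinset.mpr
      exact ((ddRun_good hσ hτ hστ s k (le_of_lt hk')).1).subset
        (mem_of_mem_drop (hf1 k hk'))
    · rw [← hf3 k hk']
      exact hcond.2
  · intro k₁ hk₁ k₂ hk₂ heq
    have h₁ : k₁ < σ.length := Finset.mem_range.mp (Finset.mem_filter.mp hk₁).1
    have h₂ : k₂ < σ.length := Finset.mem_range.mp (Finset.mem_filter.mp hk₂).1
    by_contra hne
    have key : ∀ j₁ (hj₁ : j₁ < σ.length) j₂ (hj₂ : j₂ < σ.length), j₁ < j₂ →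
        f j₁ hj₁ ≠ f j₂ hj₂ := by
      intro j₁ hj₁ j₂ hj₂ hlt heq'
      have hmem : f j₂ hj₂ ∈ (ddRun τ s σ (j₁ + 1)).drop (j₁ + 1) :=
        hsubset (j₁ + 1) j₂ (by omega) (by omega) _ (hf1 j₂ hj₂)
      rw [hf2 j₁ hj₁, ← heq'] at hmem
      exact (((hsnd j₁ (le_of_lt hj₁)).mem_erase_iff).mp hmem).1 rfl
    rcases Nat.lt_or_ge k₁ k₂ with h | h
    · exact key k₁ h₁ k₂ h₂ h heq
    · have : k₂ < k₁ := by omega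
      exact key k₂ h₂ k₁ h₁ this heq.symm
  · intro b hb
    obtain ⟨hbσ, hbinv⟩ := Finset.mem_filter.mp hb
    have hbσ' : b ∈ σ := mem_toFinset.mp hbσ
    have hb0 : b ∈ (ddRun τ s σ 0).drop 0 := by simpa [ddRun] using hbσ'
    have hbm : b ∉ (ddRun τ s σ σ.length).drop σ.length := by
      have hlen : (ddRun τ s σ σ.length).length = σ.length :=
        ((ddRun_good hσ hτ hστ s σ.length le_rfl).1).length_eq
      rw [drop_eq_nil_of_le (le_of_eq hlen)]
      simp
    have hfind : ∀ n, n ≤ σ.length → b ∉ (ddRun τ s σ n).drop n →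
        ∃ k, k < n ∧ b ∈ (ddRun τ s σ k).drop k ∧ b ∉ (ddRun τ s σ (k + 1)).drop (k + 1) := by
      intro n
      induction n with
      | zero => intro _ h; exact absurd hb0 h
      | succ n ih =>
          intro hn h
          by_cases hbn : b ∈ (ddRun τ s σ n).drop n
          · exact ⟨n, by omega, hbn, h⟩
          · obtain ⟨k, hk, ha1, ha2⟩ := ih (by omega) hbn
            exact ⟨k, by omega, ha1, ha2⟩
    obtain ⟨k, hk, h1, h2⟩ := hfind σ.length le_rfl hbm
    have hbeq : b = f k hk := by
      by_contra hne
      rw [hf2 k hk] at h2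
      exact h2 ((mem_erase_of_ne hne).mpr h1)
    refine ⟨k, ?_, hbeq.symm⟩
    apply Finset.mem_filter.mpr
    refine ⟨Finset.mem_range.mpr hk, by omega, ?_⟩
    rw [hf3 k hk, ← hbeq]
    exact hbinv

end DDHelper

/-- Kendall's Tau distance between two rankings given as lists: the number of
ordered pairs `(a, b)` ranked `a` above `b` by `σ` but `b` above `a` by `τ`. -/
def kendall {α : Type*} [DecidableEq α] (σ τ : List α) : ℕ :=
  ((σ.toFinset ×ˢ σ.toFinset).filter
    (fun p => σ.idxOf p.1 < σ.idxOf p.2 ∧ τ.idxOf p.2 < τ.idxOf p.1)).card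

/-- For any two linear orders `σ`, `τ` over the same finite set
of `m` alternatives, and any two sorting algorithms `s, s'` (arbitrary
interleavings of selection-sort and insertion-sort steps), the count function
is the same: the number of drag-and-drop operations moving an alternative up
by exactly `ℓ` positions is independent of the algorithm. -/
theorem count_function_algorithm_independent {α : Type*} [DecidableEq α]
    (m : ℕ) (σ τ : List α) (hσ : σ.Nodup) (hτ : τ.Nodup) (hperm : σ.Perm τ)
    (hm : σ.length = m) (s s' : ℕ → Bool) (ℓ : ℕ) (hℓ : ℓ ∈ Finset.Icc 1 (m - 1)) :
    countF τ σ s ℓ = countF τ σ s' ℓ := by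
  have hℓ1 : 1 ≤ ℓ := (Finset.mem_Icc.mp hℓ).1
  rw [countF_eq hσ hτ hperm s ℓ hℓ1, countF_eq hσ hτ hperm s' ℓ hℓ1]
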